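/- A homogeneous continuum X is infinite-dimensional (covering dimension) if and only if X is not strongly countable dimensional, i.e., X cannot be written as a countable union of closed finite-dimensional subsets. -/

import Mathlib

/-- Covering dimension of a space is at most `n`: every open cover admits an open shrinking
of order at most `n + 1`. -/
def CovDimLE (Y : Type*) [TopologicalSpace Y] (n : ℕ) : Prop :=
  ∀ (ι : Type) (U : ι → Set Y), (∀ i, IsOpen (U i)) → (⋃ i, U i) = Set.univ →
    ∃ V : ι → Set Y, (∀ i, IsOpen (V i)) ∧ (∀ i, V i ⊆ U i) ∧ (⋃ i, V i) = Set.univ ∧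
      ∀ y : Y, {i | y ∈ V i}.encard ≤ (n : ℕ∞) + 1

/-- Covering dimension is a topological invariant. -/
lemma covDimLE_of_homeomorph {Y Z : Type*} [TopologicalSpace Y] [TopologicalSpace Z]
    (e : Y ≃ₜ Z) {n : ℕ} (h : CovDimLE Y n) : CovDimLE Z n := by
  intro ι U hUo hUc
  obtain ⟨W, hWo, hWsub, hWc, hWord⟩ := h ι (fun i => ⇑e ⁻¹' U i)
    (fun i => (hUo i).preimage e.continuous)
    (by
      rw [← Set.preimage_iUnion, hUc, Set.preimage_univ])
  refine ⟨fun i => ⇑e.symm ⁻¹' W i, fun i => (hWo i).preimage e.symm.continuous, ?_, ?_, ?_⟩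
  · intro i z hz
    have := hWsub i hz
    simpa using this
  · rw [← Set.preimage_iUnion, hWc, Set.preimage_univ]
  · intro z
    exact hWord (e.symm z)

/-- If `A` is closed of dimension at most `n`, then any open cover of the ambient space has an
open shrinking whose order at points of `A` is at most `n + 1`. -/
lemma shrink_on_closed {Y : Type*} [TopologicalSpace Y] {n : ℕ} {A : Set Y}
    (hA : IsClosed A) (hdim : CovDimLE A n) (ι : Type) (U : ι → Set Y)
    (hUo : ∀ i, IsOpen (U i)) (hUc : (⋃ i, U i) = Set.univ) :
    ∃ V : ι → Set Y, (∀ i, IsOpen (V i)) ∧ (∀ i, V i ⊆ U i) ∧ (⋃ i, V i) = Set.univ ∧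
      ∀ y ∈ A, {i | y ∈ V i}.encard ≤ (n : ℕ∞) + 1 := by
  obtain ⟨W, hWo, hWsub, hWc, hWord⟩ := hdim ι (fun i => Subtype.val ⁻¹' U i)
    (fun i => (hUo i).preimage continuous_subtype_val)
    (by rw [← Set.preimage_iUnion, hUc, Set.preimage_univ])
  have hWrep : ∀ i, ∃ O : Set Y, IsOpen O ∧ Subtype.val ⁻¹' O = W i := by
    intro i
    exact isOpen_induced_iff.mp (hWo i)
  choose O hOo hOeq using hWrep
  refine ⟨fun i => (O i ∩ U i) ∪ (U i \ A), ?_, ?_, ?_, ?_⟩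
  · intro i
    exact (((hOo i).inter (hUo i)).union ((hUo i).sdiff hA))
  · intro i y hy
    rcases hy with hy | hy
    · exact hy.2
    · exact hy.1
  · apply Set.eq_univ_of_forall
    intro y
    by_cases hy : y ∈ A
    · have : (⟨y, hy⟩ : A) ∈ ⋃ i, W i := by rw [hWc]; trivial
      obtain ⟨i, hi⟩ := Set.mem_iUnion.mp this
      have hyO : y ∈ O i := by
        rw [← hOeq i] at hi; exact hi
      have hyU : y ∈ U i := hWsub i hi
      exact Set.mem_iUnion.mpr ⟨i, Or.inl ⟨hyO, hyU⟩⟩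
    · have : y ∈ ⋃ i, U i := by rw [hUc]; trivial
      obtain ⟨i, hi⟩ := Set.mem_iUnion.mp this
      exact Set.mem_iUnion.mpr ⟨i, Or.inr ⟨hi, hy⟩⟩
  · intro y hy
    refine le_trans (Set.encard_mono ?_) (hWord ⟨y, hy⟩)
    intro i hi
    rcases hi with hi | hi
    · show (⟨y, hy⟩ : A) ∈ W i
      rw [← hOeq i]
      exact hi.1
    · exact absurd hy hi.2

/-- Finite sum theorem, list form: iterated shrinking along a list of closed sets of dimension
at most `n` yields a shrinking of order at most `n + 1` at all points of their union. -/
lemma shrink_on_list {Y : Type*} [TopologicalSpace Y] {n : ℕ} :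
    ∀ l : List (Set Y), (∀ A ∈ l, IsClosed A ∧ CovDimLE A n) →
    ∀ (ι : Type) (U : ι → Set Y), (∀ i, IsOpen (U i)) → (⋃ i, U i) = Set.univ →
    ∃ V : ι → Set Y, (∀ i, IsOpen (V i)) ∧ (∀ i, V i ⊆ U i) ∧ (⋃ i, V i) = Set.univ ∧
      ∀ y : Y, (∃ A ∈ l, y ∈ A) → {i | y ∈ V i}.encard ≤ (n : ℕ∞) + 1 := by
  intro l
  induction l with
  | nil =>
    intro _ ι U hUo hUc
    exact ⟨U, hUo, fun i => le_refl _, hUc, fun y hy => by simp at hy⟩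
  | cons A l ih =>
    intro hl ι U hUo hUc
    obtain ⟨V₁, hV₁o, hV₁sub, hV₁c, hV₁ord⟩ :=
      ih (fun B hB => hl B (List.mem_cons_of_mem _ hB)) ι U hUo hUc
    obtain ⟨hAcl, hAdim⟩ := hl A (List.mem_cons_self)
    obtain ⟨V₂, hV₂o, hV₂sub, hV₂c, hV₂ord⟩ := shrink_on_closed hAcl hAdim ι V₁ hV₁o hV₁c
    refine ⟨V₂, hV₂o, fun i => (hV₂sub i).trans (hV₁sub i), hV₂c, ?_⟩
    rintro y ⟨B, hB, hyB⟩
    rcases List.mem_cons.mp hB with rfl | hB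
    · exact hV₂ord y hyB
    · exact le_trans (Set.encard_mono (fun i hi => hV₁sub i |> fun _ => hV₂sub i hi))
        (hV₁ord y ⟨B, hB, hyB⟩)

/-- A homogeneous metrizable continuum is infinite-dimensional iff it is not strongly
countable dimensional. -/
theorem homogeneous_continuum_infiniteDim_iff_not_strongly_countable_dim
    {X : Type*} [TopologicalSpace X] [CompactSpace X] [T2Space X] [ConnectedSpace X]
    [TopologicalSpace.MetrizableSpace X]
    (hhom : ∀ x y : X, ∃ h : X ≃ₜ X, h x = y) :
    (¬ ∃ n : ℕ, CovDimLE X n) ↔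
      ¬ ∃ F : ℕ → Set X, (∀ i, IsClosed (F i)) ∧ (∀ i, ∃ n : ℕ, CovDimLE (F i) n) ∧
        (⋃ i, F i) = Set.univ := by
  apply not_congr
  constructor
  · rintro ⟨n, hn⟩
    exact ⟨fun _ => Set.univ, fun _ => isClosed_univ,
      fun _ => ⟨n, covDimLE_of_homeomorph (Homeomorph.Set.univ X).symm hn⟩, Set.iUnion_const _⟩
  · rintro ⟨F, hFcl, hFdim, hFc⟩
    -- Baire category: some `F k` has nonempty interior
    obtain ⟨k, x0, hx0⟩ := nonempty_interior_of_iUnion_of_closed hFcl hFc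
    obtain ⟨n, hn⟩ := hFdim k
    -- translate the interior around by homogeneity
    choose g hg using fun y => hhom x0 y
    have hGo : ∀ y : X, IsOpen (⇑(g y) '' interior (F k)) :=
      fun y => (g y).isOpenMap _ isOpen_interior
    have hGc : Set.univ ⊆ ⋃ y : X, ⇑(g y) '' interior (F k) := by
      intro y _
      exact Set.mem_iUnion.mpr ⟨y, ⟨x0, hx0, hg y⟩⟩
    obtain ⟨t, ht⟩ := isCompact_univ.elim_finite_subcover _ hGo hGc
    -- the finite list of closed, ≤ n dimensional translates of `F k`
    set l : List (Set X) := t.toList.map (fun y => ⇑(g y) '' F k) with hl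
    have hlmem : ∀ A ∈ l, IsClosed A ∧ CovDimLE A n := by
      intro A hA
      rw [hl, List.mem_map] at hA
      obtain ⟨y, _, rfl⟩ := hA
      refine ⟨?_, ?_⟩
      · exact (((hFcl k).isCompact).image (g y).continuous).isClosed
      · exact covDimLE_of_homeomorph ((g y).image (F k)) hn
    refine ⟨n, ?_⟩
    intro ι U hUo hUc
    obtain ⟨V, hVo, hVsub, hVc, hVord⟩ := shrink_on_list l hlmem ι U hUo hUc
    refine ⟨V, hVo, hVsub, hVc, ?_⟩
    intro y
    apply hVord y
    have : y ∈ ⋃ z ∈ t, ⇑(g z) '' interior (F k) := ht trivial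
    rw [Set.mem_iUnion₂] at this
    obtain ⟨z, hz, hyz⟩ := this
    refine ⟨⇑(g z) '' F k, ?_, Set.image_mono interior_subset hyz⟩
    rw [hl, List.mem_map]
    exact ⟨z, Finset.mem_toList.mpr hz, rfl⟩
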